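/- Let f(X) = -log det(X) + tr(X S) + Σ_{i≠j} λ_{ij} |X_{ij}| on the set of symmetric nonsingular M-matrices, where S has strictly positive diagonal entries and λ_{ij} > 0 for all i ≠ j not in the disconnectivity set. Then for any X in the lower level set L_f = {X feasible : f(X) ≤ f(X⁰)}, the largest eigenvalue of X is bounded above by a constant M depending only on f(X⁰), S, and λ. -/

import Mathlib

open Matrix

section Aux
variable {p : ℕ}

lemma quad_single (X : Matrix (Fin p) (Fin p) ℝ) (i : Fin p) :
    star (Pi.single i 1 : Fin p → ℝ) ⬝ᵥ X *ᵥ (Pi.single i 1 : Fin p → ℝ) = X i i := by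
  simp [dotProduct, mulVec, Pi.single_apply, Finset.sum_ite_eq', mul_ite]

lemma diag_pos' {X : Matrix (Fin p) (Fin p) ℝ} (hX : X.PosDef) (i : Fin p) :
    0 < X i i := by
  exact hX.diag_pos

lemma diag_nonneg' {X : Matrix (Fin p) (Fin p) ℝ} (hX : X.PosSemidef) (i : Fin p) :
    0 ≤ X i i := by
  exact hX.diag_nonneg

lemma trace_eq_sum_eig {X : Matrix (Fin p) (Fin p) ℝ} (hX : X.IsHermitian) :
    X.trace = ∑ i, hX.eigenvalues i := by
  nth_rewrite 1 [hX.spectral_theorem]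
  rw [Unitary.conjStarAlgAut_apply, trace_mul_cycle, mem_unitaryGroup_iff'.mp (hX.eigenvectorUnitary).2, one_mul,
    trace_diagonal]
  simp [RCLike.ofReal_real_eq_id]

lemma psd_of_eig_le {X : Matrix (Fin p) (Fin p) ℝ} (hX : X.IsHermitian) {M : ℝ}
    (h : ∀ i, hX.eigenvalues i ≤ M) :
    (M • (1 : Matrix (Fin p) (Fin p) ℝ) - X).PosSemidef := by
  set U : Matrix (Fin p) (Fin p) ℝ := (hX.eigenvectorUnitary : Matrix (Fin p) (Fin p) ℝ) with hUdef
  have hUU : U * star U = 1 := mem_unitaryGroup_iff.mp (hX.eigenvectorUnitary).2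
  have e1 : diagonal (fun i => M - hX.eigenvalues i)
      = M • (1 : Matrix (Fin p) (Fin p) ℝ) - diagonal (RCLike.ofReal ∘ hX.eigenvalues) := by
    rw [smul_one_eq_diagonal, ← diagonal_sub]
    congr 1
  have key : M • (1 : Matrix (Fin p) (Fin p) ℝ) - X
      = U * diagonal (fun i => M - hX.eigenvalues i) * Uᴴ := by
    rw [e1, ← Matrix.star_eq_conjTranspose, mul_sub, sub_mul]
    nth_rewrite 1 [hX.spectral_theorem]
    rw [Unitary.conjStarAlgAut_apply]
    congr 1
    rw [mul_smul_comm, mul_one, smul_mul_assoc, hUU]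
  rw [key]
  exact (PosSemidef.diagonal (fun i => sub_nonneg.2 (h i))).mul_mul_conjTranspose_same U

lemma trace_mul_nonneg' {X S : Matrix (Fin p) (Fin p) ℝ} (hX : X.PosSemidef)
    (hS : S.PosSemidef) : 0 ≤ (X * S).trace := by
  obtain ⟨B, hB⟩ : ∃ B : Matrix (Fin p) (Fin p) ℝ, X = Bᴴ * B := by
    open scoped MatrixOrder in
    exact (CStarAlgebra.nonneg_iff_eq_star_mul_self.mp hX.nonneg).imp
      fun B h => by rw [h, star_eq_conjTranspose]
  rw [hB, mul_assoc, trace_mul_comm]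
  have hpsd : ((B * S) * Bᴴ).PosSemidef := hS.mul_mul_conjTranspose_same B
  exact Finset.sum_nonneg fun i _ => diag_nonneg' hpsd i

end Aux

/-- The feasible set of the sign-constrained log-determinant program: symmetric positive
definite matrices with nonpositive off-diagonal entries vanishing on the disconnectivity
set `E`. -/
def feasible {p : ℕ} (E : Set (Fin p × Fin p)) (X : Matrix (Fin p) (Fin p) ℝ) : Prop :=
  X.PosDef ∧ (∀ i j, i ≠ j → X i j ≤ 0) ∧ (∀ i j, (i, j) ∈ E → X i j = 0)

/-- The objective `f(X) = -log det X + tr(X S) + Σ_{i≠j} λ_{ij} |X_{ij}|`. -/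
noncomputable def obj {p : ℕ} (S : Matrix (Fin p) (Fin p) ℝ) (l : Fin p → Fin p → ℝ)
    (X : Matrix (Fin p) (Fin p) ℝ) : ℝ :=
  -Real.log X.det + (X * S).trace + ∑ i, ∑ j, if i ≠ j then l i j * |X i j| else 0

/-- For the sign-constrained log-determinant objective with `S` positive
semidefinite having strictly positive diagonal and positive off-diagonal regularization
weights off the disconnectivity set, every `X` in the lower level set
`L_f = {X feasible : f(X) ≤ f(X⁰)}` has its largest eigenvalue bounded above by a constant
`M` (depending only on `f(X⁰)`, `S` and `λ`), i.e. `X ⪯ M I`. -/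
theorem stmt_4 {p : ℕ} (S : Matrix (Fin p) (Fin p) ℝ) (hS : S.PosSemidef)
    (hSdiag : ∀ i, 0 < S i i)
    (E : Set (Fin p × Fin p)) (hE : ∀ ij ∈ E, ij.1 ≠ ij.2)
    (l : Fin p → Fin p → ℝ) (hl : ∀ i j, i ≠ j → (i, j) ∉ E → 0 < l i j)
    (X0 : Matrix (Fin p) (Fin p) ℝ) (hX0 : feasible E X0) :
    ∃ M : ℝ, 0 < M ∧ ∀ X : Matrix (Fin p) (Fin p) ℝ,
      feasible E X → obj S l X ≤ obj S l X0 →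
        (M • (1 : Matrix (Fin p) (Fin p) ℝ) - X).PosSemidef := by
  classical
  rcases Nat.eq_zero_or_pos p with hp | hp
  · subst hp
    exact ⟨1, one_pos, fun X hX _ => psd_of_eig_le hX.1.1 (fun i => i.elim0)⟩
  haveI : Nonempty (Fin p) := Fin.pos_iff_nonempty.mp hp
  have hppos : (0:ℝ) < p := by exact_mod_cast hp
  set C := obj S l X0 with hCdef
  -- the constant μ : a positive lower bound for the diagonal of S
  obtain ⟨μ, hμpos, hμle⟩ : ∃ μ : ℝ, 0 < μ ∧ ∀ i, μ ≤ S i i :=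
    ⟨Finset.univ.inf' Finset.univ_nonempty (fun i => S i i),
      (Finset.lt_inf'_iff _).mpr (fun i _ => hSdiag i),
      fun i => Finset.inf'_le _ (Finset.mem_univ i)⟩
  -- the constant υ : an upper bound for |S i j|
  obtain ⟨υ, hυ0, hυle⟩ : ∃ υ : ℝ, 0 ≤ υ ∧ ∀ i j, |S i j| ≤ υ := by
    refine ⟨∑ i : Fin p, ∑ j : Fin p, |S i j|,
      Finset.sum_nonneg fun i _ => Finset.sum_nonneg fun j _ => abs_nonneg _, fun i j => ?_⟩
    calc |S i j| ≤ ∑ j' : Fin p, |S i j'| :=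
          Finset.single_le_sum (f := fun j' => |S i j'|) (fun j' _ => abs_nonneg _)
            (Finset.mem_univ j)
      _ ≤ ∑ i' : Fin p, ∑ j' : Fin p, |S i' j'| :=
          Finset.single_le_sum (f := fun i' => ∑ j' : Fin p, |S i' j'|)
            (fun i' _ => Finset.sum_nonneg fun _ _ => abs_nonneg _) (Finset.mem_univ i)
  -- the constant ν : a positive lower bound for the active weights
  obtain ⟨ν, hνpos, hνle⟩ : ∃ ν : ℝ, 0 < ν ∧ ∀ i j, i ≠ j → (i, j) ∉ E → ν ≤ l i j := by
    by_cases hne : (Finset.univ.filter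
        (fun ij : Fin p × Fin p => ij.1 ≠ ij.2 ∧ ij ∉ E)).Nonempty
    · refine ⟨(Finset.univ.filter
          (fun ij : Fin p × Fin p => ij.1 ≠ ij.2 ∧ ij ∉ E)).inf' hne (fun ij : Fin p × Fin p => l ij.1 ij.2),
        (Finset.lt_inf'_iff _).mpr fun ij hij => ?_, fun i j hij hE' =>
        Finset.inf'_le (fun ij : Fin p × Fin p => l ij.1 ij.2)
          (Finset.mem_filter.mpr ⟨Finset.mem_univ _, hij, hE'⟩ : (i, j) ∈ Finset.univ.filter
            (fun ij : Fin p × Fin p => ij.1 ≠ ij.2 ∧ ij ∉ E))⟩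
      obtain ⟨-, h1, h2⟩ := Finset.mem_filter.mp hij
      exact hl ij.1 ij.2 h1 h2
    · exact ⟨1, one_pos, fun i j hij hE' =>
        absurd (⟨(i, j), Finset.mem_filter.mpr ⟨Finset.mem_univ _, hij, hE'⟩⟩ : (Finset.univ.filter
          (fun ij : Fin p × Fin p => ij.1 ≠ ij.2 ∧ ij ∉ E)).Nonempty) hne⟩
  set K : ℝ := 1 + υ / ν with hKdef
  have hK1 : (1:ℝ) ≤ K := le_add_of_nonneg_right (div_nonneg hυ0 hνpos.le)
  have hK0 : (0:ℝ) < K := lt_of_lt_of_le one_pos hK1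
  have hKν : υ / ν ≤ K := le_add_of_nonneg_left zero_le_one
  set c : ℝ := 2 * K * (p:ℝ) / μ with hcdef
  have hcpos : 0 < c := div_pos (by positivity) hμpos
  set D : ℝ := K * C + K * (p:ℝ) * Real.log c with hDdef
  clear_value C K c D
  refine ⟨max 1 (2 * D / μ), lt_of_lt_of_le one_pos (le_max_left _ _), ?_⟩
  intro X hXf hobj
  obtain ⟨hXpd, hXoff, hXE⟩ := hXf
  have herm : X.IsHermitian := hXpd.1
  set t := X.trace with htdef
  have htrX : X.trace = ∑ i, X i i := rfl
  have htpos : 0 < t := by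
    rw [htdef, htrX]
    exact Finset.sum_pos (fun i _ => diag_pos' hXpd i) Finset.univ_nonempty
  set s := ∑ i, ∑ j, if i ≠ j then |X i j| else 0 with hsdef
  set P := ∑ i, ∑ j, if i ≠ j then l i j * |X i j| else 0 with hPdef
  clear_value t s P
  have hs0 : 0 ≤ s := by
    rw [hsdef]
    refine Finset.sum_nonneg fun i _ => Finset.sum_nonneg fun j _ => ?_
    split
    · exact abs_nonneg _
    · exact le_rfl
  have hP0 : 0 ≤ P := by
    rw [hPdef]
    refine Finset.sum_nonneg fun i _ => Finset.sum_nonneg fun j _ => ?_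
    split
    · next hij =>
      by_cases hEm : (i, j) ∈ E
      · rw [hXE i j hEm]; simp
      · exact mul_nonneg (hl i j hij hEm).le (abs_nonneg _)
    · exact le_rfl
  have htr : (X * S).trace = ∑ i, ∑ j, X i j * S j i := by
    simp [Matrix.trace, Matrix.diag, Matrix.mul_apply]
  -- step 1 : μ t ≤ tr(XS) + υ s
  have h1 : μ * t ≤ (X * S).trace + υ * s := by
    rw [htr, htdef, htrX, hsdef, Finset.mul_sum, Finset.mul_sum]
    simp_rw [Finset.mul_sum, mul_ite, mul_zero]
    rw [← Finset.sum_add_distrib]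
    refine Finset.sum_le_sum fun i _ => ?_
    rw [← Finset.sum_add_distrib]
    have hlhs : μ * X i i = ∑ j, (if i = j then μ * X i j else 0) := by simp
    rw [hlhs]
    refine Finset.sum_le_sum fun j _ => ?_
    by_cases hij : i = j
    · subst hij
      simp only [if_pos rfl, ne_eq, not_true_eq_false, if_false, ite_false, ite_true,
        if_true, ite_self]
      have h01 := diag_pos' hXpd i
      have h02 := hμle i
      nlinarith
    · simp only [if_neg hij, if_pos hij]
      have habs : |X i j * S j i| ≤ |X i j| * υ := by
        rw [abs_mul]; exact mul_le_mul_of_nonneg_left (hυle j i) (abs_nonneg _)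
      have hneg := neg_abs_le (X i j * S j i)
      have hcm : |X i j| * υ = υ * |X i j| := mul_comm _ _
      linarith
  -- step 2 : υ s ≤ (υ/ν) P
  have h2 : υ * s ≤ (υ / ν) * P := by
    rw [hsdef, hPdef, Finset.mul_sum, Finset.mul_sum]
    simp_rw [Finset.mul_sum, mul_ite, mul_zero]
    refine Finset.sum_le_sum fun i _ => Finset.sum_le_sum fun j _ => ?_
    by_cases hij : i ≠ j
    · simp only [if_pos hij]
      by_cases hEm : (i, j) ∈ E
      · rw [hXE i j hEm]; simp
      · have hν' := hνle i j hij hEm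
        have he : υ * |X i j| = υ / ν * (ν * |X i j|) := by
          field_simp
        rw [he]
        exact mul_le_mul_of_nonneg_left
          (mul_le_mul_of_nonneg_right hν' (abs_nonneg _)) (div_nonneg hυ0 hνpos.le)
    · simp [hij]
  -- step 3 : tr(XS) ≥ 0
  have h3 : 0 ≤ (X * S).trace := trace_mul_nonneg' hXpd.posSemidef hS
  -- step 4 : tr(XS) + P ≤ C + log det X
  have h4 : (X * S).trace + P ≤ C + Real.log X.det := by
    rw [obj, ← hPdef] at hobj
    linarith
  -- eigenvalue facts
  have heig_pos : ∀ i, 0 < herm.eigenvalues i := fun i => hXpd.eigenvalues_pos i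
  have heig_le : ∀ i, herm.eigenvalues i ≤ t := by
    intro i
    rw [htdef, trace_eq_sum_eig herm]
    exact Finset.single_le_sum (fun j _ => (heig_pos j).le) (Finset.mem_univ i)
  -- step 5 : log det X ≤ p log t
  have h5 : Real.log X.det ≤ (p:ℝ) * Real.log t := by
    have hdet : X.det = ∏ i, herm.eigenvalues i := by
      simpa using herm.det_eq_prod_eigenvalues
    have hprod : X.det ≤ t ^ p := by
      rw [hdet]
      calc ∏ i, herm.eigenvalues i ≤ ∏ _i : Fin p, t :=
            Finset.prod_le_prod (fun i _ => (heig_pos i).le) (fun i _ => heig_le i)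
        _ = t ^ p := by simp
    calc Real.log X.det ≤ Real.log (t ^ p) := Real.log_le_log hXpd.det_pos hprod
      _ = (p:ℝ) * Real.log t := by rw [Real.log_pow]
  -- step 6 : log t ≤ t/c + log c
  have h6 : Real.log t ≤ t / c + Real.log c := by
    have he : Real.log t = Real.log (t / c) + Real.log c := by
      rw [← Real.log_mul (div_ne_zero htpos.ne' hcpos.ne') hcpos.ne', div_mul_cancel₀]
      exact hcpos.ne'
    rw [he]
    have := Real.log_le_sub_one_of_pos (div_pos htpos hcpos)
    linarith
  -- main chain
  have hmain : μ * t ≤ K * (C + (p:ℝ) * Real.log t) := by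
    have hA : μ * t ≤ (X * S).trace + (υ / ν) * P := by linarith
    have g1 : 0 ≤ (K - 1) * (X * S).trace := mul_nonneg (by linarith) h3
    have g2 : 0 ≤ (K - υ / ν) * P := mul_nonneg (by linarith) hP0
    have hB : (X * S).trace + (υ / ν) * P ≤ K * ((X * S).trace + P) := by nlinarith
    have hC' : (X * S).trace + P ≤ C + (p:ℝ) * Real.log t := by linarith
    calc μ * t ≤ K * ((X * S).trace + P) := le_trans hA hB
      _ ≤ K * (C + (p:ℝ) * Real.log t) := mul_le_mul_of_nonneg_left hC' hK0.le
  have hfin : t ≤ 2 * D / μ := by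
    have e : K * (p:ℝ) * (t / c) = μ / 2 * t := by
      rw [hcdef]
      field_simp
    have hKp : (0:ℝ) ≤ K * (p:ℝ) := by positivity
    have h7 := mul_le_mul_of_nonneg_left h6 hKp
    have eq1 : K * (C + (p:ℝ) * Real.log t) = K * C + K * (p:ℝ) * Real.log t := by ring
    have eq2 : K * (p:ℝ) * (t / c + Real.log c)
        = K * (p:ℝ) * (t / c) + K * (p:ℝ) * Real.log c := by ring
    have h8 : μ * t ≤ K * C + K * (p:ℝ) * Real.log c + μ / 2 * t := by
      linarith [hmain, h7, e, eq1, eq2]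
    rw [le_div_iff₀ hμpos]
    rw [hDdef]
    linarith
  refine psd_of_eig_le herm fun i => ?_
  calc herm.eigenvalues i ≤ t := heig_le i
    _ ≤ 2 * D / μ := hfin
    _ ≤ max 1 (2 * D / μ) := le_max_right _ _
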